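/- Let k, s, τ⁻, τ⁺, F, α be real numbers with k > 0, 0 < s ≤ k, τ⁻ ≥ 0, τ⁺ ≥ 0, F ≥ exp((k−s)/k)·k·τ⁻ + s·τ⁺, and s·τ⁺ ≥ (1 − α·exp((k−s)/k))·F. Then for every x with 0 ≤ x < k, g(x) ≥ (1 − α)·F. -/

import Mathlib

open Real

/-- Monotonicity of `(exp u - 1)/u`: for `0 ≤ t ≤ u`,
`u * (exp t - 1) ≤ t * (exp u - 1)`. -/
lemma exp_ratio_mono {t u : ℝ} (ht : 0 ≤ t) (htu : t ≤ u) :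
    u * (Real.exp t - 1) ≤ t * (Real.exp u - 1) := by
  have h1 : 1 + (u - t) ≤ Real.exp (u - t) := by
    linarith [Real.add_one_le_exp (u - t)]
  have h2 : Real.exp u = Real.exp t * Real.exp (u - t) := by
    rw [← Real.exp_add]; ring_nf
  have h0 : Real.exp t * Real.exp (-t) = 1 := by
    rw [← Real.exp_add]; simp
  have h3 : Real.exp t * (1 - t) ≤ 1 := by
    nlinarith [Real.add_one_le_exp (-t), Real.exp_pos t]
  have h5 : Real.exp t * (1 + (u - t)) ≤ Real.exp u := by
    nlinarith [Real.exp_pos t]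
  have h6 : t * (Real.exp t * (1 + (u - t))) ≤ t * Real.exp u :=
    mul_le_mul_of_nonneg_left h5 ht
  have h7 : 0 ≤ (u - t) * (1 - Real.exp t * (1 - t)) :=
    mul_nonneg (by linarith) (by linarith)
  nlinarith [h6, h7]

set_option maxHeartbeats 1000000 in
/-- Order-dependent `(1−α)`-approximation via Case 3: if
`F ≥ e^{(k−s)/k} k τ⁻ + s τ⁺` and `s τ⁺ ≥ (1 − α e^{(k−s)/k}) F`, then
`g(x) ≥ (1 − α) F` for every `x ∈ [0, k)`. -/
theorem case3_one_sub_alpha (k s τm τp F α : ℝ) (hk : 0 < k)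
    (hs0 : 0 < s) (hsk : s ≤ k) (hτm : 0 ≤ τm) (hτp : 0 ≤ τp)
    (hF : Real.exp ((k - s) / k) * k * τm + s * τp ≤ F)
    (hτplevel : (1 - α * Real.exp ((k - s) / k)) * F ≤ s * τp) :
    ∀ x : ℝ, 0 ≤ x → x < k →
      (1 - α) * F ≤ (1 - Real.exp (-(k - s) / (k - x))) * (F - x * τm)
        + Real.exp (-(k - s) / (k - x)) * s * τp := by
  intro x hx hxk
  have hkx : 0 < k - x := by linarith
  have hks : 0 ≤ k - s := by linarith
  set t : ℝ := (k - s) / k with ht_def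
  set u : ℝ := (k - s) / (k - x) with hu_def
  have hrw : -(k - s) / (k - x) = -u := by rw [hu_def, neg_div]
  rw [hrw]
  set c : ℝ := Real.exp t with hc_def
  set E : ℝ := Real.exp (-u) with hE_def
  have ht0 : 0 ≤ t := div_nonneg hks hk.le
  have htu : t ≤ u := div_le_div_of_nonneg_left hks hkx (by linarith)
  have hu0 : 0 ≤ u := le_trans ht0 htu
  have htk : t * k = k - s := by rw [ht_def]; exact div_mul_cancel₀ _ hk.ne'
  have hukx : u * (k - x) = k - s := by rw [hu_def]; exact div_mul_cancel₀ _ hkx.ne'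
  have hc0 : (0:ℝ) < c := Real.exp_pos t
  have hc1 : (1:ℝ) ≤ c := Real.one_le_exp ht0
  have hE0 : (0:ℝ) < E := Real.exp_pos (-u)
  have hE1 : E ≤ 1 := Real.exp_le_one_iff.mpr (by linarith)
  have hEu : E * Real.exp u = 1 := by
    rw [hE_def, ← Real.exp_add]; simp
  -- key geometric inequality: E * (c*k - x) ≤ k - x
  have hku : k * (c - 1) ≤ (k - x) * (Real.exp u - 1) := by
    rcases eq_or_lt_of_le ht0 with h | h
    · -- t = 0 : then k = s, u = 0
      have hks0 : k - s = 0 := by rw [← htk, ← h]; ring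
      have hu0' : u = 0 := by
        have := hukx; rw [hks0] at this
        exact (mul_eq_zero.mp this).resolve_right (by linarith)
      have hc1' : c = 1 := by rw [hc_def, ← h, Real.exp_zero]
      rw [hu0', hc1', Real.exp_zero]; norm_num
    · -- t > 0
      have lem := exp_ratio_mono ht0 htu
      have lem' : (k - x) * (u * (c - 1)) ≤ (k - x) * (t * (Real.exp u - 1)) :=
        mul_le_mul_of_nonneg_left lem hkx.le
      have key : t * (k * (c - 1)) ≤ t * ((k - x) * (Real.exp u - 1)) := by
        nlinarith [lem', htk, hukx]
      exact le_of_mul_le_mul_left key h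
  have hstar : E * (c * k - x) ≤ k - x := by
    have h1 : c * k - x ≤ (k - x) * Real.exp u := by nlinarith
    have h2 : E * (c * k - x) ≤ E * ((k - x) * Real.exp u) :=
      mul_le_mul_of_nonneg_left h1 hE0.le
    nlinarith [h2, hEu]
  -- set D := F - s * τp
  set D : ℝ := F - s * τp with hD_def
  have hτmD : c * k * τm ≤ D := by rw [hD_def]; linarith [hF]
  have hD0 : (0:ℝ) ≤ D := le_trans (by positivity) hτmD
  have hF0 : (0:ℝ) ≤ F := by
    have h := hD0; rw [hD_def] at h
    have := mul_nonneg hs0.le hτp; linarith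
  have hca : D ≤ c * (α * F) := by
    have h := hτplevel
    rw [hD_def]; ring_nf at h ⊢; linarith
  -- main bound: c * (x*τm*(1-E) + E*D) ≤ D
  have hmain : c * (x * τm * (1 - E) + E * D) ≤ D := by
    have h1 : 0 ≤ x * (1 - E) := mul_nonneg hx (by linarith)
    have h2 : (c * k * τm) * (x * (1 - E)) ≤ D * (x * (1 - E)) :=
      mul_le_mul_of_nonneg_right hτmD h1
    have h3 : x * (1 - E) + c * k * E ≤ k := by nlinarith [hstar]
    have h4 : D * (x * (1 - E) + c * k * E) ≤ D * k :=
      mul_le_mul_of_nonneg_left h3 hD0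
    have h5 : k * (c * (x * τm * (1 - E) + E * D)) ≤ k * D := by
      ring_nf at h2 h4 ⊢; linarith
    exact le_of_mul_le_mul_left h5 hk
  have hfinal : x * τm * (1 - E) + E * D ≤ α * F := by
    have : c * (x * τm * (1 - E) + E * D) ≤ c * (α * F) := le_trans hmain hca
    exact le_of_mul_le_mul_left this hc0
  rw [hD_def] at hfinal
  nlinarith [hfinal]
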